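/- Let n ≥ 1 and let j satisfy 1 ≤ j ≤ n−1 and gcd(j, n) = 1. Let (x₁, y₁), (x₂, y₂) ∈ ℂ². If x₁^n = x₂^n, x₁^{n−j}y₁^j = x₂^{n−j}y₂^j, and y₁^n = y₂^n, then there exists ζ ∈ ℂ with ζ^n = 1 such that x₂ = ζ·x₁ and y₂ = ζ·y₁. That is, the polynomials x^n, x^{n−j}y^j, y^n separate the orbits of the action of the cyclic group of order n on ℂ² by scalar multiplication by n-th roots of unity. -/

import Mathlib

/-- For `1 ≤ j ≤ n − 1` with `gcd(j, n) = 1`, the invariants `x^n`, `x^{n−j}y^j`, `y^n`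
separate the orbits of the scalar action of the cyclic group of order `n` on `ℂ²`:
if two points take the same values on all three, they differ by multiplication by a
common `n`-th root of unity. -/
theorem three_invariants_separate_orbits_coprime
    (n : ℕ) (hn : 1 ≤ n) (j : ℕ) (hj1 : 1 ≤ j) (hj2 : j ≤ n - 1)
    (hgcd : Nat.gcd j n = 1) (x₁ y₁ x₂ y₂ : ℂ)
    (h1 : x₁ ^ n = x₂ ^ n)
    (h2 : x₁ ^ (n - j) * y₁ ^ j = x₂ ^ (n - j) * y₂ ^ j)
    (h3 : y₁ ^ n = y₂ ^ n) :
    ∃ ζ : ℂ, ζ ^ n = 1 ∧ x₂ = ζ * x₁ ∧ y₂ = ζ * y₁ := by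
  have hn0 : n ≠ 0 := Nat.one_le_iff_ne_zero.mp hn
  have hjn : j < n := lt_of_le_of_lt hj2 (Nat.sub_lt hn Nat.one_pos)
  have hnj : 1 ≤ n - j := Nat.le_sub_of_add_le (by omega)
  by_cases hx1 : x₁ = 0
  · have hx2 : x₂ = 0 := by
      have : x₂ ^ n = 0 := by rw [← h1, hx1, zero_pow hn0]
      exact pow_eq_zero_iff hn0 |>.mp this
    by_cases hy1 : y₁ = 0
    · have hy2 : y₂ = 0 := by
        have : y₂ ^ n = 0 := by rw [← h3, hy1, zero_pow hn0]
        exact pow_eq_zero_iff hn0 |>.mp this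
      exact ⟨1, one_pow n, by simp [hx1, hx2, hy1, hy2]⟩
    · have hy2 : y₂ ≠ 0 := fun h => hy1 (pow_eq_zero_iff hn0 |>.mp (h3.trans (by rw [h, zero_pow hn0])))
      refine ⟨y₂ / y₁, ?_, by simp [hx1, hx2], by field_simp⟩
      rw [div_pow, ← h3, div_self (pow_ne_zero _ hy1)]
  · have hx2 : x₂ ≠ 0 := fun h => hx1 (pow_eq_zero_iff hn0 |>.mp (h1.trans (by rw [h, zero_pow hn0])))
    have hα : (x₂ / x₁) ^ n = 1 := by rw [div_pow, ← h1, div_self (pow_ne_zero _ hx1)]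
    by_cases hy1 : y₁ = 0
    · have hy2 : y₂ = 0 := by
        have hj0 : j ≠ 0 := Nat.one_le_iff_ne_zero.mp hj1
        have : x₂ ^ (n - j) * y₂ ^ j = 0 := by rw [← h2, hy1, zero_pow hj0, mul_zero]
        rcases mul_eq_zero.mp this with h | h
        · exact absurd (pow_eq_zero_iff (Nat.one_le_iff_ne_zero.mp hnj) |>.mp h) hx2
        · exact pow_eq_zero_iff hj0 |>.mp h
      exact ⟨x₂ / x₁, hα, by field_simp, by simp [hy1, hy2]⟩
    · have hy2 : y₂ ≠ 0 := fun h => hy1 (pow_eq_zero_iff hn0 |>.mp (h3.trans (by rw [h, zero_pow hn0])))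
      set α := x₂ / x₁ with hαdef
      set β := y₂ / y₁ with hβdef
      have hβ : β ^ n = 1 := by rw [hβdef, div_pow, ← h3, div_self (pow_ne_zero _ hy1)]
      have hab : α ^ (n - j) * β ^ j = 1 := by
        rw [hαdef, hβdef, div_pow, div_pow, div_mul_div_comm, ← h2, div_self]
        exact mul_ne_zero (pow_ne_zero _ hx1) (pow_ne_zero _ hy1)
      have hα0 : α ≠ 0 := div_ne_zero hx2 hx1
      have hg : (β / α) ^ j = 1 := by
        have hαj : α ^ (n - j) * α ^ j = 1 := by
          rw [← pow_add, Nat.sub_add_cancel hjn.le]; exact hα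
        have hβj : β ^ j = α ^ j :=
          mul_left_cancel₀ (pow_ne_zero _ hα0) (hab.trans hαj.symm)
        rw [div_pow, hβj, div_self (pow_ne_zero _ hα0)]
      have hgn : (β / α) ^ n = 1 := by
        rw [div_pow, hβ, hα, div_one]
      have : (β / α) ^ Nat.gcd j n = 1 := pow_gcd_eq_one.mpr ⟨hg, hgn⟩
      rw [hgcd, pow_one] at this
      have hαβ : β = α := by
        field_simp at this; exact this
      refine ⟨α, hα, by rw [hαdef]; field_simp, by rw [← hαβ, hβdef]; field_simp⟩
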